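/- For every integer k ≥ 6, there exists a coalition partition Ψ of the path P_k with three parts such that the coalition graph CG(P_k, Ψ) is isomorphic to the complete graph K_3. -/

import Mathlib

open SimpleGraph

attribute [local instance] Classical.propDecidable

def Dominates {V : Type*} (G : SimpleGraph V) (S : Set V) : Prop :=
  ∀ v, v ∉ S → ∃ u ∈ S, G.Adj u v

def Coalition {V : Type*} (G : SimpleGraph V) (A B : Set V) : Prop :=
  Disjoint A B ∧ ¬ Dominates G A ∧ ¬ Dominates G B ∧ Dominates G (A ∪ B)

def IsCoalitionPartition {V : Type*} (G : SimpleGraph V) (P : Finset (Set V)) : Prop :=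
  (∀ A ∈ P, A.Nonempty) ∧
  (∀ A ∈ P, ∀ B ∈ P, A ≠ B → Disjoint A B) ∧
  (∀ v : V, ∃ A ∈ P, v ∈ A) ∧
  (∀ A ∈ P, (Dominates G A ∧ ∃ v, A = {v}) ∨
    (¬ Dominates G A ∧ ∃ B ∈ P, B ≠ A ∧ Coalition G A B))

noncomputable def coalitionNumber {V : Type*} (G : SimpleGraph V) : ℕ :=
  sSup {n | ∃ P : Finset (Set V), IsCoalitionPartition G P ∧ P.card = n}

def coalitionGraph {V : Type*} (G : SimpleGraph V) (P : Finset (Set V)) :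
    SimpleGraph {A : Set V // A ∈ P} where
  Adj A B := Coalition G A.1 B.1
  symm := by
    constructor
    rintro A B ⟨d, na, nb, u⟩
    exact ⟨d.symm, nb, na, by rwa [Set.union_comm]⟩
  loopless := by
    constructor
    rintro ⟨A, hA⟩ ⟨d, na, nb, u⟩
    rw [Set.union_self] at u
    exact na u

/- Auxiliary definitions: the three parts of our partition of `P_k`. -/

def SA (k : ℕ) : Set (Fin k) := {v | v.val = 0 ∨ v.val = 2}

def SB (k : ℕ) : Set (Fin k) := {v | v.val = 3 ∨ v.val = 4 ∨ (6 ≤ v.val ∧ v.val % 2 = 0)}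

def SC (k : ℕ) : Set (Fin k) := {v | v.val = 1 ∨ v.val = 5 ∨ (7 ≤ v.val ∧ v.val % 2 = 1)}

lemma coalition_symm {V : Type*} {G : SimpleGraph V} {A B : Set V}
    (h : Coalition G A B) : Coalition G B A := by
  obtain ⟨d, na, nb, u⟩ := h
  exact ⟨d.symm, nb, na, by rwa [Set.union_comm]⟩

section parts

variable {k : ℕ} (hk : 6 ≤ k)

set_option linter.unusedSectionVars false

include hk

lemma ndSA : ¬ Dominates (pathGraph k) (SA k) := by
  intro h
  obtain ⟨u, hu, hadj⟩ := h ⟨5, by omega⟩ (by simp [SA])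
  rw [pathGraph_adj] at hadj
  simp only [Fin.val_mk] at hadj
  simp only [SA, Set.mem_setOf_eq] at hu
  omega

lemma ndSB : ¬ Dominates (pathGraph k) (SB k) := by
  intro h
  obtain ⟨u, hu, hadj⟩ := h ⟨0, by omega⟩ (by simp [SB])
  rw [pathGraph_adj] at hadj
  simp only [Fin.val_mk] at hadj
  simp only [SB, Set.mem_setOf_eq] at hu
  omega

lemma ndSC : ¬ Dominates (pathGraph k) (SC k) := by
  intro h
  obtain ⟨u, hu, hadj⟩ := h ⟨3, by omega⟩ (by simp [SC])
  rw [pathGraph_adj] at hadj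
  simp only [Fin.val_mk] at hadj
  simp only [SC, Set.mem_setOf_eq] at hu
  omega

lemma domAB : Dominates (pathGraph k) (SA k ∪ SB k) := by
  intro v hv
  simp only [SA, SB, Set.mem_union, Set.mem_setOf_eq, not_or, not_and] at hv
  have hvk := v.isLt
  refine ⟨⟨v.val - 1, by omega⟩, ?_, ?_⟩
  · simp only [SA, SB, Set.mem_union, Set.mem_setOf_eq, Fin.val_mk]
    omega
  · rw [pathGraph_adj]
    simp only [Fin.val_mk]
    omega

lemma domAC : Dominates (pathGraph k) (SA k ∪ SC k) := by
  intro v hv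
  simp only [SA, SC, Set.mem_union, Set.mem_setOf_eq, not_or, not_and] at hv
  have hvk := v.isLt
  by_cases h4 : v.val = 4
  · refine ⟨⟨5, by omega⟩, ?_, ?_⟩
    · simp [SA, SC]
    · rw [pathGraph_adj]; simp only [Fin.val_mk]; omega
  · refine ⟨⟨v.val - 1, by omega⟩, ?_, ?_⟩
    · simp only [SA, SC, Set.mem_union, Set.mem_setOf_eq, Fin.val_mk]
      omega
    · rw [pathGraph_adj]; simp only [Fin.val_mk]; omega

lemma domBC : Dominates (pathGraph k) (SB k ∪ SC k) := by
  intro v hv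
  simp only [SB, SC, Set.mem_union, Set.mem_setOf_eq, not_or, not_and] at hv
  have hvk := v.isLt
  refine ⟨⟨v.val + 1, by omega⟩, ?_, ?_⟩
  · simp only [SB, SC, Set.mem_union, Set.mem_setOf_eq, Fin.val_mk]
    omega
  · rw [pathGraph_adj]
    exact Or.inr rfl

lemma disjAB : Disjoint (SA k) (SB k) := by
  rw [Set.disjoint_left]
  intro v hv hv'
  simp only [SA, SB, Set.mem_setOf_eq] at hv hv'
  omega

lemma disjAC : Disjoint (SA k) (SC k) := by
  rw [Set.disjoint_left]
  intro v hv hv'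
  simp only [SA, SC, Set.mem_setOf_eq] at hv hv'
  omega

lemma disjBC : Disjoint (SB k) (SC k) := by
  rw [Set.disjoint_left]
  intro v hv hv'
  simp only [SB, SC, Set.mem_setOf_eq] at hv hv'
  omega

lemma coalAB : Coalition (pathGraph k) (SA k) (SB k) :=
  ⟨disjAB hk, ndSA hk, ndSB hk, domAB hk⟩

lemma coalAC : Coalition (pathGraph k) (SA k) (SC k) :=
  ⟨disjAC hk, ndSA hk, ndSC hk, domAC hk⟩

lemma coalBC : Coalition (pathGraph k) (SB k) (SC k) :=
  ⟨disjBC hk, ndSB hk, ndSC hk, domBC hk⟩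

lemma neAB : SA k ≠ SB k := by
  intro h
  have h0 : (⟨0, by omega⟩ : Fin k) ∈ SA k := Or.inl rfl
  rw [h] at h0
  simp only [SB, Set.mem_setOf_eq] at h0
  omega

lemma neAC : SA k ≠ SC k := by
  intro h
  have h0 : (⟨0, by omega⟩ : Fin k) ∈ SA k := Or.inl rfl
  rw [h] at h0
  simp only [SC, Set.mem_setOf_eq] at h0
  omega

lemma neBC : SB k ≠ SC k := by
  intro h
  have h0 : (⟨3, by omega⟩ : Fin k) ∈ SB k := Or.inl rfl
  rw [h] at h0
  simp only [SC, Set.mem_setOf_eq] at h0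
  omega

end parts

theorem stmt14 (k : ℕ) (hk : 6 ≤ k) :
    ∃ P : Finset (Set (Fin k)),
      IsCoalitionPartition (SimpleGraph.pathGraph k) P ∧ P.card = 3 ∧
      Nonempty ((coalitionGraph (SimpleGraph.pathGraph k) P) ≃g
        (⊤ : SimpleGraph (Fin 3))) := by
  classical
  set G := SimpleGraph.pathGraph k with hG
  refine ⟨{SA k, SB k, SC k}, ?_, ?_, ?_⟩
  · refine ⟨?_, ?_, ?_, ?_⟩
    · intro A hA
      simp only [Finset.mem_insert, Finset.mem_singleton] at hA
      rcases hA with rfl | rfl | rfl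
      · exact ⟨⟨0, by omega⟩, Or.inl rfl⟩
      · exact ⟨⟨3, by omega⟩, Or.inl rfl⟩
      · exact ⟨⟨1, by omega⟩, Or.inl rfl⟩
    · intro A hA B hB hne
      simp only [Finset.mem_insert, Finset.mem_singleton] at hA hB
      rcases hA with rfl | rfl | rfl <;> rcases hB with rfl | rfl | rfl <;>
        first
          | exact absurd rfl hne
          | exact disjAB hk
          | exact disjAC hk
          | exact disjBC hk
          | exact (disjAB hk).symm
          | exact (disjAC hk).symm
          | exact (disjBC hk).symm
    · intro v
      by_cases hA : v ∈ SA k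
      · exact ⟨SA k, by simp, hA⟩
      by_cases hB : v ∈ SB k
      · exact ⟨SB k, by simp, hB⟩
      refine ⟨SC k, by simp, ?_⟩
      simp only [SA, SB, SC, Set.mem_setOf_eq, not_or, not_and] at *
      have := v.isLt
      omega
    · intro A hA
      simp only [Finset.mem_insert, Finset.mem_singleton] at hA
      rcases hA with rfl | rfl | rfl
      · exact Or.inr ⟨ndSA hk, SB k, by simp, (neAB hk).symm, coalAB hk⟩
      · exact Or.inr ⟨ndSB hk, SC k, by simp, (neBC hk).symm, coalBC hk⟩
      · exact Or.inr ⟨ndSC hk, SA k, by simp, neAC hk, coalition_symm (coalAC hk)⟩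
  · rw [Finset.card_insert_of_notMem (by simp [neAB hk, neAC hk]),
      Finset.card_insert_of_notMem (by simp [neBC hk]), Finset.card_singleton]
  · have key : ∀ A ∈ ({SA k, SB k, SC k} : Finset (Set (Fin k))),
        ∀ B ∈ ({SA k, SB k, SC k} : Finset (Set (Fin k))), A ≠ B → Coalition G A B := by
      intro A hA B hB hne
      simp only [Finset.mem_insert, Finset.mem_singleton] at hA hB
      rcases hA with rfl | rfl | rfl <;> rcases hB with rfl | rfl | rfl <;>
        first
          | exact absurd rfl hne
          | exact coalAB hk
          | exact coalAC hk
          | exact coalBC hk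
          | exact coalition_symm (coalAB hk)
          | exact coalition_symm (coalAC hk)
          | exact coalition_symm (coalBC hk)
    have hEq : coalitionGraph G ({SA k, SB k, SC k} : Finset (Set (Fin k))) = ⊤ := by
      ext A B
      show Coalition G A.1 B.1 ↔ A ≠ B
      constructor
      · rintro ⟨d, na, nb, u⟩ rfl
        rw [Set.union_self] at u
        exact na u
      · intro hne
        exact key A.1 A.2 B.1 B.2 (fun h => hne (Subtype.ext h))
    rw [hEq]
    have hcard : Fintype.card {A : Set (Fin k) // A ∈ ({SA k, SB k, SC k} : Finset (Set (Fin k)))} = 3 := by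
      rw [Fintype.card_coe]
      rw [Finset.card_insert_of_notMem (by simp [neAB hk, neAC hk]),
        Finset.card_insert_of_notMem (by simp [neBC hk]), Finset.card_singleton]
    exact ⟨Iso.completeGraph (Fintype.equivFinOfCardEq hcard)⟩
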